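/- arXiv:1912.02378 — 2 statements merged into one kernel-verified Lean document; each statement's English description precedes it below -/
import Mathlib

section
/- For p ≥ q ≥ 1, the largest signless Laplacian eigenvalue of the double star G(p,2,q) lies strictly between p+2 and p+3; in particular it is never an integer. -/
open Matrix SimpleGraph Polynomial

/-- The signless Laplacian matrix Q(G) = D(G) + A(G). -/
noncomputable def signlessLaplacian {V : Type*} [Fintype V] [DecidableEq V]
    (G : SimpleGraph V) [DecidableRel G.Adj] : Matrix V V ℝ :=
  Matrix.diagonal (fun v => (G.degree v : ℝ)) + G.adjMatrix ℝ

/-- Eigenvalues (roots of the characteristic polynomial, with multiplicity),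
sorted in non-increasing order. -/
noncomputable def eigsDesc {V : Type*} [Fintype V] [DecidableEq V] (M : Matrix V V ℝ) : List ℝ :=
  (M.charpoly.roots.sort (· ≤ ·)).reverse

/-- Vertex degrees sorted in non-increasing order. -/
noncomputable def degsDesc {V : Type*} [Fintype V] [DecidableEq V]
    (G : SimpleGraph V) [DecidableRel G.Adj] : List ℕ :=
  ((Finset.univ.val.map fun v => G.degree v).sort (· ≤ ·)).reverse

/-- The double star G(p,2,q): vertices 0 and 1 are adjacent centers; vertices
2,…,p+1 are pendants attached to 0, and vertices p+2,…,p+q+1 are pendants attached to 1. -/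
def doubleStar (p q : ℕ) : SimpleGraph (Fin (p + q + 2)) :=
  SimpleGraph.fromRel (fun a b =>
    ((a : ℕ) = 0 ∧ (b : ℕ) = 1) ∨
    ((a : ℕ) = 0 ∧ 2 ≤ (b : ℕ) ∧ (b : ℕ) < p + 2) ∨
    ((a : ℕ) = 1 ∧ p + 2 ≤ (b : ℕ)))

instance (p q : ℕ) : DecidableRel (doubleStar p q).Adj := fun a b => by
  unfold doubleStar; exact inferInstanceAs (Decidable (_ ∧ _))

lemma ds_adj (p q : ℕ) (a b : Fin (p+q+2)) :
    (doubleStar p q).Adj a b ↔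
      ((a : ℕ) = 0 ∧ 1 ≤ (b:ℕ) ∧ (b:ℕ) < p + 2) ∨
      ((b : ℕ) = 0 ∧ 1 ≤ (a:ℕ) ∧ (a:ℕ) < p + 2) ∨
      ((a : ℕ) = 1 ∧ p + 2 ≤ (b:ℕ)) ∨
      ((b : ℕ) = 1 ∧ p + 2 ≤ (a:ℕ)) := by
  simp only [doubleStar, SimpleGraph.fromRel_adj, ne_eq, Fin.ext_iff]
  constructor
  · rintro ⟨h, h2⟩; omega
  · intro h
    have hb := b.isLt
    have ha := a.isLt
    omega

lemma card_fin_filter {n : ℕ} (P : Fin n → Prop) [DecidablePred P] (s : Finset ℕ)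
    (h : ∀ j : Fin n, P j ↔ j.val ∈ s) (hs : ∀ m ∈ s, m < n) :
    (Finset.univ.filter P).card = s.card := by
  refine Finset.card_bij' (fun (j : Fin n) _ => j.val) (fun m hm => (⟨m, hs m hm⟩ : Fin n)) ?hi ?hj ?li ?ri
  case hi => intro a ha; exact (h a).1 (by simpa using ha)
  case hj => intro m hm; simp only [Finset.mem_filter, Finset.mem_univ, true_and]; exact (h _).2 hm
  case li => intro a ha; rfl
  case ri => intro m hm; rfl

variable (p q : ℕ)

lemma deg0 (a : Fin (p+q+2)) (ha : (a:ℕ) = 0) : (doubleStar p q).degree a = p + 1 := by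
  have : a = ⟨0, by omega⟩ := Fin.ext (by simp [ha])
  rw [this]
  rw [SimpleGraph.degree, SimpleGraph.neighborFinset_eq_filter]
  rw [card_fin_filter _ (Finset.Ico 1 (p+2))
    (fun j => by rw [ds_adj]; simp [Finset.mem_Ico]; try omega)
    (fun m hm => by simp [Finset.mem_Ico] at hm; omega)]
  simp

lemma deg1 (a : Fin (p+q+2)) (ha : (a:ℕ) = 1) : (doubleStar p q).degree a = q + 1 := by
  have : a = ⟨1, by omega⟩ := Fin.ext (by simp [ha])
  rw [this]
  rw [SimpleGraph.degree, SimpleGraph.neighborFinset_eq_filter]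
  rw [card_fin_filter _ (insert 0 (Finset.Ico (p+2) (p+q+2)))
    (fun j => by rw [ds_adj]; simp [Finset.mem_Ico, Finset.mem_insert]; try omega)
    (fun m hm => by simp [Finset.mem_Ico, Finset.mem_insert] at hm; omega)]
  rw [Finset.card_insert_of_notMem (by simp [Finset.mem_Ico])]
  simp

lemma degPend (w : Fin (p+q+2)) (hw : 2 ≤ (w:ℕ)) : (doubleStar p q).degree w = 1 := by
  rw [SimpleGraph.degree, SimpleGraph.neighborFinset_eq_filter]
  by_cases hw2 : (w:ℕ) < p + 2
  · rw [card_fin_filter _ {0}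
      (fun j => by rw [ds_adj]; simp only [Finset.mem_singleton]; omega)
      (fun m hm => by simp at hm; omega)]
    simp
  · rw [card_fin_filter _ {1}
      (fun j => by rw [ds_adj]; simp only [Finset.mem_singleton]; omega)
      (fun m hm => by simp at hm; omega)]
    simp

lemma Q_apply {V : Type*} [Fintype V] [DecidableEq V] (G : SimpleGraph V) [DecidableRel G.Adj]
    (a b : V) : signlessLaplacian G a b =
    (if a = b then (G.degree a : ℝ) else 0) + (if G.Adj a b then 1 else 0) := by
  simp [signlessLaplacian, Matrix.diagonal_apply, Matrix.add_apply]

/-- off-diagonal blocks -/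
def Bm (x : ℝ) : Matrix (Fin 2) (Fin (p+q)) ℝ :=
  fun i j => if (i = 0 ∧ (j:ℕ) < p) ∨ (i = 1 ∧ p ≤ (j:ℕ)) then -1 else 0

noncomputable def Am (x : ℝ) : Matrix (Fin 2) (Fin 2) ℝ :=
  !![x - (p+1), -1; -1, x - (q+1)]

def dsEquiv : Fin 2 ⊕ Fin (p+q) ≃ Fin (p+q+2) :=
  finSumFinEquiv.trans (finCongr (by omega))

lemma dsEquiv_inl (i : Fin 2) : dsEquiv p q (Sum.inl i) = ⟨(i:ℕ), by omega⟩ := by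
  apply Fin.ext; simp [dsEquiv]

lemma dsEquiv_inr (j : Fin (p+q)) : dsEquiv p q (Sum.inr j) = ⟨2 + (j:ℕ), by omega⟩ := by
  apply Fin.ext; simp [dsEquiv]; omega

lemma submatrix_eq (x : ℝ) :
    ((x • (1 : Matrix (Fin (p+q+2)) (Fin (p+q+2)) ℝ) - signlessLaplacian (doubleStar p q)).submatrix
      (dsEquiv p q) (dsEquiv p q)) =
    fromBlocks (Am p q x) (Bm p q x) (Bm p q x)ᵀ ((x-1) • 1) := by
  ext i j
  rcases i with i | i <;> rcases j with j | j <;>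
    simp only [Matrix.submatrix_apply, Matrix.sub_apply, Matrix.smul_apply, Matrix.one_apply,
      fromBlocks_apply₁₁, fromBlocks_apply₁₂, fromBlocks_apply₂₁, fromBlocks_apply₂₂,
      Q_apply, Matrix.transpose_apply, smul_eq_mul, dsEquiv_inl, dsEquiv_inr]
  · -- A block
    obtain ⟨iv, hi⟩ := i; obtain ⟨jv, hj⟩ := j
    interval_cases iv <;> interval_cases jv <;>
      simp only [Fin.val_mk, Fin.mk_zero, Fin.mk_one, Fin.val_zero, Fin.val_one, Nat.cast_ofNat,
        Nat.cast_zero, Nat.cast_one]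
    · erw [deg0 p q 0 (by simp)]
      simp [Am, ds_adj]
      try push_cast
      try ring
    · have hne : ((0 : Fin (p+q+2)) = (1 : Fin (p+q+2))) ↔ False := by
        simp [Fin.ext_iff]
      simp [Am, ds_adj, hne]
    · have hne : ((1 : Fin (p+q+2)) = (0 : Fin (p+q+2))) ↔ False := by
        simp [Fin.ext_iff]
      simp [Am, ds_adj, hne]
    · erw [deg1 p q 1 (by simp)]
      simp [Am, ds_adj]
      try push_cast
      try ring
  · -- B block
    obtain ⟨iv, hi⟩ := i
    interval_cases iv <;>
      simp only [Fin.val_mk, Fin.mk_zero, Fin.mk_one, Fin.val_zero, Fin.val_one, Nat.cast_ofNat,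
        Nat.cast_zero, Nat.cast_one]
    · have hne : ((0 : Fin (p+q+2)) = ⟨2 + (j:ℕ), by omega⟩) ↔ False := by
        simp [Fin.ext_iff]; omega
      by_cases hj : (j:ℕ) < p
      · have h2 : 1 ≤ 2 + (j:ℕ) ∧ 2 + (j:ℕ) < p + 2 := by omega
        simp [Bm, ds_adj, hne, h2, hj]
      · have h2 : ¬(1 ≤ 2 + (j:ℕ) ∧ 2 + (j:ℕ) < p + 2) := by omega
        simp [Bm, ds_adj, hne, h2, hj]
    · have hne : ((1 : Fin (p+q+2)) = ⟨2 + (j:ℕ), by omega⟩) ↔ False := by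
        simp [Fin.ext_iff]; omega
      by_cases hj : p ≤ (j:ℕ)
      · have h2 : p + 2 ≤ 2 + (j:ℕ) := by omega
        simp [Bm, ds_adj, hne, h2, hj]
      · have h2 : ¬(p + 2 ≤ 2 + (j:ℕ)) := by omega
        simp [Bm, ds_adj, hne, h2, hj]
  · -- C block
    obtain ⟨jv, hj⟩ := j
    interval_cases jv <;>
      simp only [Fin.val_mk, Fin.mk_zero, Fin.mk_one, Fin.val_zero, Fin.val_one, Nat.cast_ofNat,
        Nat.cast_zero, Nat.cast_one]
    · have hne : ((⟨2 + (i:ℕ), by omega⟩ : Fin (p+q+2)) = 0) ↔ False := by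
        simp [Fin.ext_iff]
      by_cases hi : (i:ℕ) < p
      · have h2 : 1 ≤ 2 + (i:ℕ) ∧ 2 + (i:ℕ) < p + 2 := by omega
        simp [Bm, ds_adj, hne, h2, hi]
      · have h2 : ¬(1 ≤ 2 + (i:ℕ) ∧ 2 + (i:ℕ) < p + 2) := by omega
        simp [Bm, ds_adj, hne, h2, hi]
    · have hne : ((⟨2 + (i:ℕ), by omega⟩ : Fin (p+q+2)) = 1) ↔ False := by
        simp [Fin.ext_iff]; omega
      by_cases hi : p ≤ (i:ℕ)
      · have h2 : p + 2 ≤ 2 + (i:ℕ) := by omega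
        simp [Bm, ds_adj, hne, h2, hi]
      · have h2 : ¬(p + 2 ≤ 2 + (i:ℕ)) := by omega
        simp [Bm, ds_adj, hne, h2, hi]
  · -- D block
    rcases eq_or_ne i j with rfl | hij
    · rw [degPend p q _ (by simp)]
      simp [ds_adj]
    · have hne : ((⟨2 + (i:ℕ), by omega⟩ : Fin (p+q+2)) = ⟨2 + (j:ℕ), by omega⟩) ↔ False := by
        simp [Fin.ext_iff]; omega
      simp [ds_adj, hne, Matrix.one_apply, hij]
      omega

lemma sum_ind (P : Fin (p+q) → Prop) [DecidablePred P] (s : Finset ℕ)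
    (h : ∀ j : Fin (p+q), P j ↔ j.val ∈ s) (hs : ∀ m ∈ s, m < p+q) :
    (∑ j : Fin (p+q), (if P j then (1:ℝ) else 0)) = s.card := by
  rw [Finset.sum_boole, card_fin_filter _ s h hs]

lemma BBt (x : ℝ) : Bm p q x * (Bm p q x)ᵀ = !![(p:ℝ), 0; 0, (q:ℝ)] := by
  ext i j
  rw [Matrix.mul_apply]
  simp only [Matrix.transpose_apply]
  fin_cases i <;> fin_cases j <;> simp only [Fin.mk_zero, Fin.mk_one]
  · rw [Finset.sum_congr rfl (fun k _ => (show Bm p q x 0 k * Bm p q x 0 k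
        = if (k:ℕ) < p then (1:ℝ) else 0 by
      simp only [Bm, Fin.ext_iff, Fin.val_zero, Fin.val_one]; try norm_num; try (split_ifs <;> first | norm_num | (exfalso; omega))))]
    rw [sum_ind p q _ (Finset.range p) (fun k => by simp) (fun m hm => by simp at hm; omega)]
    simp
  · rw [Finset.sum_eq_zero (fun k _ => (show Bm p q x 0 k * Bm p q x 1 k = 0 by
      simp only [Bm, Fin.ext_iff, Fin.val_zero, Fin.val_one]; try norm_num; try (split_ifs <;> first | norm_num | (exfalso; omega))))]
    simp
  · rw [Finset.sum_eq_zero (fun k _ => (show Bm p q x 1 k * Bm p q x 0 k = 0 by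
      simp only [Bm, Fin.ext_iff, Fin.val_zero, Fin.val_one]; try norm_num; try (split_ifs <;> first | norm_num | (exfalso; omega))))]
    simp
  · rw [Finset.sum_congr rfl (fun k _ => (show Bm p q x 1 k * Bm p q x 1 k
        = if p ≤ (k:ℕ) then (1:ℝ) else 0 by
      simp only [Bm, Fin.ext_iff, Fin.val_zero, Fin.val_one]; try norm_num; try (split_ifs <;> first | norm_num | (exfalso; omega))))]
    rw [sum_ind p q _ (Finset.Ico p (p+q)) (fun k => by simp [Finset.mem_Ico]; try omega)
      (fun m hm => by simp [Finset.mem_Ico] at hm; omega)]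
    simp

lemma det_eq (x : ℝ) (hx : x ≠ 1) :
    (x • (1 : Matrix (Fin (p+q+2)) (Fin (p+q+2)) ℝ) - signlessLaplacian (doubleStar p q)).det
      = (x-1)^(p+q) *
        ((x - (p+1) - p * (x-1)⁻¹) * (x - (q+1) - q * (x-1)⁻¹) - 1) := by
  have hx1 : x - 1 ≠ 0 := sub_ne_zero.mpr hx
  rw [← Matrix.det_submatrix_equiv_self (dsEquiv p q), submatrix_eq]
  letI : Invertible ((x-1) • (1 : Matrix (Fin (p+q)) (Fin (p+q)) ℝ)) :=
    ⟨(x-1)⁻¹ • 1, by simp [Matrix.smul_mul, Matrix.mul_smul, smul_smul,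
        inv_mul_cancel₀ hx1, mul_inv_cancel₀ hx1], by simp [Matrix.smul_mul, Matrix.mul_smul,
        smul_smul, inv_mul_cancel₀ hx1, mul_inv_cancel₀ hx1]⟩
  rw [Matrix.det_fromBlocks₂₂]
  have hinv : ⅟((x-1) • (1 : Matrix (Fin (p+q)) (Fin (p+q)) ℝ)) = (x-1)⁻¹ • 1 := rfl
  rw [hinv]
  have hD : ((x-1) • (1 : Matrix (Fin (p+q)) (Fin (p+q)) ℝ)).det = (x-1)^(p+q) := by
    rw [Matrix.det_smul, Matrix.det_one]; simp
  rw [hD]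
  congr 1
  have hBC : Bm p q x * ((x-1)⁻¹ • (1 : Matrix (Fin (p+q)) (Fin (p+q)) ℝ)) * (Bm p q x)ᵀ = (x-1)⁻¹ • !![(p:ℝ), 0; 0, (q:ℝ)] := by
    rw [Matrix.mul_smul, Matrix.mul_one, Matrix.smul_mul, BBt]
  rw [hBC]
  rw [Matrix.det_fin_two]
  simp [Am, Matrix.sub_apply, Matrix.smul_apply]
  ring

lemma eval_charpoly' {n : Type*} [Fintype n] [DecidableEq n] (M : Matrix n n ℝ) (x : ℝ) :
    M.charpoly.eval x = (x • (1:Matrix n n ℝ) - M).det := by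
  rw [Matrix.charpoly, ← Polynomial.coe_evalRingHom, RingHom.map_det]
  congr 1
  ext i j
  by_cases h : i = j
  · subst h; simp [charmatrix_apply_eq, Matrix.one_apply]
  · simp [charmatrix_apply_ne _ _ _ h, Matrix.one_apply, h]

theorem stmt_14 (p q : ℕ) (hq : 1 ≤ q) (hpq : q ≤ p)
    (γ₁ : ℝ) (hγ : γ₁ = (eigsDesc (signlessLaplacian (doubleStar p q))).getD 0 0) :
    ((p : ℝ) + 2 < γ₁ ∧ γ₁ < (p : ℝ) + 3) ∧ ¬ ∃ k : ℤ, γ₁ = (k : ℝ) := by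
  classical
  set M := signlessLaplacian (doubleStar p q) with hM
  set F : ℝ → ℝ := fun x => M.charpoly.eval x with hF
  have hq1 : (1:ℝ) ≤ q := by exact_mod_cast hq
  have hqp : (q:ℝ) ≤ p := by exact_mod_cast hpq
  have hp0 : (0:ℝ) ≤ p := Nat.cast_nonneg p
  have hkey : ∀ x : ℝ, x ≠ 1 → F x = (x-1)^(p+q) *
      ((x - ((p:ℝ)+1) - p * (x-1)⁻¹) * (x - ((q:ℝ)+1) - q * (x-1)⁻¹) - 1) := by
    intro x hx
    show M.charpoly.eval x = _
    rw [eval_charpoly', hM, det_eq p q x hx]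
  have hF2 : F ((p:ℝ)+2) < 0 := by
    rw [hkey _ (by intro h; nlinarith)]
    have hpow : 0 < ((p:ℝ)+2-1)^(p+q) := pow_pos (by linarith) _
    apply mul_neg_of_pos_of_neg hpow
    have h21 : (p:ℝ)+2-1 = (p:ℝ)+1 := by ring
    rw [h21]
    have hne : ((p:ℝ)+1) ≠ 0 := by linarith
    have key2 : ((p:ℝ)+2 - ((p:ℝ)+1) - p * ((p:ℝ)+1)⁻¹) *
        (((p:ℝ)+2) - ((q:ℝ)+1) - q * ((p:ℝ)+1)⁻¹) - 1
        = -((q:ℝ)*((p:ℝ)+2)*(((p:ℝ)+1)⁻¹)^2) := by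
      field_simp
      ring
    rw [key2]
    have hv : 0 < ((p:ℝ)+1)⁻¹ := by positivity
    have : 0 < (q:ℝ)*((p:ℝ)+2)*(((p:ℝ)+1)⁻¹)^2 := by positivity
    linarith
  have hF3 : ∀ x : ℝ, (p:ℝ)+3 ≤ x → 0 < F x := by
    intro x hx3
    have hx1 : 0 < x - 1 := by linarith
    rw [hkey x (by intro h; rw [h] at hx1; norm_num at hx1)]
    have hpow : 0 < (x-1)^(p+q) := pow_pos hx1 _
    apply mul_pos hpow
    set u : ℝ := (x-1)⁻¹ with hudef
    have hu0 : 0 < u := by positivity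
    have hu : (x-1)*u = 1 := mul_inv_cancel₀ (ne_of_gt hx1)
    set A : ℝ := x - ((p:ℝ)+1) - p*u with hAdef
    set B : ℝ := x - ((q:ℝ)+1) - q*u with hBdef
    have e1 : (p:ℝ) * u * (x-1) = p := by
      rw [mul_assoc, mul_comm u, hu, mul_one]
    have hpu : (p:ℝ) * u < 1 := by nlinarith
    have hA : 1 < A := by
      rw [hAdef]
      nlinarith
    have hBA : A ≤ B := by
      have h1 : B - A = ((p:ℝ) - q) * (1 + u) := by rw [hAdef, hBdef]; ring
      have h2 : 0 ≤ ((p:ℝ) - q) * (1 + u) :=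
        mul_nonneg (by linarith) (by linarith)
      linarith
    have h0A : 0 < A := by linarith
    have hAB : A*A ≤ A*B := mul_le_mul_of_nonneg_left hBA (le_of_lt h0A)
    nlinarith
  have hcont : ContinuousOn F (Set.Icc ((p:ℝ)+2) ((p:ℝ)+3)) :=
    (Polynomial.continuous _).continuousOn
  obtain ⟨r, hrIoo, hr0⟩ := intermediate_value_Ioo (by linarith : (p:ℝ)+2 ≤ (p:ℝ)+3) hcont
    (Set.mem_Ioo.mpr ⟨hF2, hF3 _ le_rfl⟩)
  have hcp0 : M.charpoly ≠ 0 := (Matrix.charpoly_monic M).ne_zero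
  have hrroot : r ∈ M.charpoly.roots := by
    rw [Polynomial.mem_roots hcp0]
    exact hr0
  have hrL : r ∈ M.charpoly.roots.sort (· ≤ ·) := (Multiset.mem_sort _).mpr hrroot
  have hLne : M.charpoly.roots.sort (· ≤ ·) ≠ [] := List.ne_nil_of_mem hrL
  obtain ⟨a, t, hrev⟩ := List.exists_cons_of_ne_nil
    (l := (M.charpoly.roots.sort (· ≤ ·)).reverse)
    (fun h => hLne (by simpa using h))
  have hγa : γ₁ = a := by
    rw [hγ]
    show ((M.charpoly.roots.sort (· ≤ ·)).reverse).getD 0 0 = a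
    rw [hrev]
    rfl
  have hmax : ∀ y ∈ M.charpoly.roots, y ≤ a := by
    intro y hy
    have hyL : y ∈ M.charpoly.roots.sort (· ≤ ·) := (Multiset.mem_sort _).mpr hy
    have hyrev : y ∈ a :: t := by rw [← hrev]; exact List.mem_reverse.mpr hyL
    rcases List.mem_cons.mp hyrev with h | h
    · exact le_of_eq h
    · have hsort : (M.charpoly.roots.sort (· ≤ ·)).Pairwise (· ≤ ·) :=
        Multiset.pairwise_sort _ _
      have hrevp : ((M.charpoly.roots.sort (· ≤ ·)).reverse).Pairwise (fun x y => y ≤ x) :=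
        List.pairwise_reverse.mpr hsort
      rw [hrev] at hrevp
      exact List.rel_of_pairwise_cons hrevp h
  have haroot : a ∈ M.charpoly.roots := by
    have : a ∈ (M.charpoly.roots.sort (· ≤ ·)).reverse := by
      rw [hrev]; exact List.mem_cons_self
    exact (Multiset.mem_sort _).mp (List.mem_reverse.mp this)
  have h1 : (p:ℝ)+2 < γ₁ := by
    rw [hγa]
    exact lt_of_lt_of_le hrIoo.1 (hmax r hrroot)
  have h2 : γ₁ < (p:ℝ)+3 := by
    by_contra h
    push_neg at h
    have hpos : 0 < F γ₁ := hF3 _ h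
    have hz : F γ₁ = 0 := by
      rw [hγa]
      exact (Polynomial.mem_roots hcp0).mp haroot
    linarith
  refine ⟨⟨h1, h2⟩, ?_⟩
  rintro ⟨k, hk⟩
  rw [hk] at h1 h2
  have hk1 : (p:ℤ) + 2 < k := by exact_mod_cast h1
  have hk2 : k < (p:ℤ) + 3 := by exact_mod_cast h2
  omega
end

section
/- For any graph G of order n ≥ 2, the second largest signless Laplacian eigenvalue satisfies γ₂(G) ≤ n − 2. -/
open Matrix SimpleGraph Polynomial

section Aux

variable {V : Type*} [Fintype V] [DecidableEq V]

/-- The signless Laplacian is a (real) Hermitian matrix. -/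
lemma sL_isHermitian (G : SimpleGraph V) [DecidableRel G.Adj] :
    (signlessLaplacian G).IsHermitian := by
  unfold signlessLaplacian
  apply Matrix.IsHermitian.add (Matrix.isHermitian_diagonal _)
  ext i j
  simp [Matrix.conjTranspose_apply, SimpleGraph.adjMatrix_apply, SimpleGraph.adj_comm]

/-- The quadratic form of the signless Laplacian. -/
lemma sL_quad (G : SimpleGraph V) [DecidableRel G.Adj] (x : V → ℝ) :
    x ⬝ᵥ (signlessLaplacian G *ᵥ x) =
      ∑ u, (G.degree u : ℝ) * x u ^ 2 + ∑ u, ∑ v ∈ G.neighborFinset u, x u * x v := by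
  unfold signlessLaplacian
  simp only [dotProduct, Matrix.add_mulVec, Pi.add_apply, Matrix.mulVec_diagonal,
    SimpleGraph.adjMatrix_mulVec_apply, mul_add, Finset.sum_add_distrib, Finset.mul_sum]
  congr 1
  exact Finset.sum_congr rfl fun u _ => by ring

/-- The signless Laplacian is positive semidefinite. -/
lemma sL_quad_nonneg (G : SimpleGraph V) [DecidableRel G.Adj] (x : V → ℝ) :
    0 ≤ x ⬝ᵥ (signlessLaplacian G *ᵥ x) := by
  have hdeg : ∀ u, (G.degree u : ℝ) * x u ^ 2 = ∑ v ∈ G.neighborFinset u, x u ^ 2 := by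
    intro u
    rw [Finset.sum_const, SimpleGraph.degree, nsmul_eq_mul]
  have swap : (∑ u, ∑ v, if G.Adj u v then x v ^ 2 else 0)
      = ∑ u, ∑ v, if G.Adj u v then x u ^ 2 else 0 := by
    rw [Finset.sum_comm]
    refine Finset.sum_congr rfl fun u _ => Finset.sum_congr rfl fun v _ => ?_
    exact if_congr (G.adj_comm v u) rfl rfl
  have key : 2 * (x ⬝ᵥ (signlessLaplacian G *ᵥ x)) =
      ∑ u, ∑ v, if G.Adj u v then (x u + x v) ^ 2 else 0 := by
    rw [sL_quad]
    simp only [hdeg, SimpleGraph.neighborFinset_eq_filter, Finset.sum_filter]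
    rw [mul_add]
    have expand : ∀ u v : V, (if G.Adj u v then (x u + x v) ^ 2 else 0)
        = (if G.Adj u v then x u ^ 2 else 0) + (if G.Adj u v then x v ^ 2 else 0)
          + 2 * (if G.Adj u v then x u * x v else 0) := by
      intro u v
      by_cases h : G.Adj u v
      · simp only [if_pos h]; ring
      · simp [h]
    simp only [expand, Finset.sum_add_distrib, ← Finset.mul_sum, swap]
    ring
  have hnn : 0 ≤ ∑ u, ∑ v, if G.Adj u v then (x u + x v) ^ 2 else 0 := by
    refine Finset.sum_nonneg fun u _ => Finset.sum_nonneg fun v _ => ?_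
    split <;> positivity
  linarith [key, hnn]

/-- Entrywise: Q(G) + Q(Gᶜ) = (n-2)·I + J. -/
lemma sL_add_compl_apply (G : SimpleGraph V) [DecidableRel G.Adj] (u v : V) :
    signlessLaplacian G u v + signlessLaplacian Gᶜ u v
      = (if u = v then ((Fintype.card V : ℝ) - 2) else 0) + 1 := by
  unfold signlessLaplacian
  by_cases h : u = v
  · subst h
    have h1 : G.degree u < Fintype.card V := G.degree_lt_card_verts u
    have h2 : Gᶜ.degree u = Fintype.card V - 1 - G.degree u := G.degree_compl u
    have h3 : G.degree u ≤ Fintype.card V - 1 := Nat.le_sub_one_of_lt h1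
    have h4 : (1 : ℕ) ≤ Fintype.card V := by omega
    simp only [Matrix.add_apply, Matrix.diagonal_apply_eq, SimpleGraph.adjMatrix_apply,
      SimpleGraph.irrefl, if_false, if_pos rfl]
    rw [h2, Nat.cast_sub h3, Nat.cast_sub h4]
    push_cast
    ring
  · have hcompl : Gᶜ.Adj u v ↔ ¬ G.Adj u v := by
      rw [SimpleGraph.compl_adj]; tauto
    simp only [Matrix.add_apply, Matrix.diagonal_apply_ne _ h, SimpleGraph.adjMatrix_apply,
      if_neg h]
    by_cases hadj : G.Adj u v <;> simp [hadj, hcompl]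

/-- The quadratic form bound on the hyperplane orthogonal to the all-ones vector. -/
lemma sL_quad_le (G : SimpleGraph V) [DecidableRel G.Adj] (x : V → ℝ)
    (hx : ∑ v, x v = 0) :
    x ⬝ᵥ (signlessLaplacian G *ᵥ x) ≤ ((Fintype.card V : ℝ) - 2) * (x ⬝ᵥ x) := by
  have hcompl := sL_quad_nonneg Gᶜ x
  have hmv : ∀ u, (signlessLaplacian G *ᵥ x) u + (signlessLaplacian Gᶜ *ᵥ x) u
      = ((Fintype.card V : ℝ) - 2) * x u := by
    intro u
    simp only [Matrix.mulVec, dotProduct]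
    rw [← Finset.sum_add_distrib]
    have hterm : ∀ v, signlessLaplacian G u v * x v + signlessLaplacian Gᶜ u v * x v
        = (if u = v then ((Fintype.card V : ℝ) - 2) * x v else 0) + x v := by
      intro v
      rw [← add_mul, sL_add_compl_apply]
      by_cases h : u = v
      · simp [h]; ring
      · simp [h]
    simp only [hterm, Finset.sum_add_distrib, Finset.sum_ite_eq, Finset.mem_univ, if_true, hx,
      add_zero]
  have hsum : x ⬝ᵥ (signlessLaplacian G *ᵥ x) + x ⬝ᵥ (signlessLaplacian Gᶜ *ᵥ x)
      = ((Fintype.card V : ℝ) - 2) * (x ⬝ᵥ x) := by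
    simp only [dotProduct, ← Finset.sum_add_distrib, ← mul_add, Finset.mul_sum]
    exact Finset.sum_congr rfl fun u _ => by rw [hmv u]; ring
  linarith

/-- Orthonormality of the eigenvector basis, expressed with dot products. -/
lemma eigbasis_dot {A : Matrix V V ℝ} (hA : A.IsHermitian) (i j : V) :
    (⇑(hA.eigenvectorBasis i) ⬝ᵥ ⇑(hA.eigenvectorBasis j)) = if i = j then 1 else 0 := by
  have h := orthonormal_iff_ite.mp hA.eigenvectorBasis.orthonormal i j
  rw [PiLp.inner_apply] at h
  simpa [dotProduct, RCLike.inner_apply, starRingEnd_apply, mul_comm] using h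

/-- A real symmetric matrix whose quadratic form is at most `c • ‖x‖²` on the hyperplane
`∑ x = 0` has at most one eigenvalue exceeding `c`. -/
lemma atmost_one {A : Matrix V V ℝ} (hA : A.IsHermitian) {c : ℝ}
    (hq : ∀ x : V → ℝ, ∑ v, x v = 0 → x ⬝ᵥ (A *ᵥ x) ≤ c * (x ⬝ᵥ x))
    {i j : V} (hij : i ≠ j) (hi : c < hA.eigenvalues i) (hj : c < hA.eigenvalues j) :
    False := by
  set v : V → ℝ := ⇑(hA.eigenvectorBasis i) with hv
  set w : V → ℝ := ⇑(hA.eigenvectorBasis j) with hw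
  have hvv : v ⬝ᵥ v = 1 := by simpa using eigbasis_dot hA i i
  have hww : w ⬝ᵥ w = 1 := by simpa using eigbasis_dot hA j j
  have hvw : v ⬝ᵥ w = 0 := by simpa [hij] using eigbasis_dot hA i j
  have hwv : w ⬝ᵥ v = 0 := by simpa [hij.symm] using eigbasis_dot hA j i
  have hAv : A *ᵥ v = hA.eigenvalues i • v := hA.mulVec_eigenvectorBasis i
  have hAw : A *ᵥ w = hA.eigenvalues j • w := hA.mulVec_eigenvectorBasis j
  set a : ℝ := ∑ u, w u with ha
  set b : ℝ := -∑ u, v u with hb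
  by_cases hv0 : ∑ u, v u = 0
  · have := hq v hv0
    rw [hAv, dotProduct_smul, hvv] at this
    simp at this
    linarith
  · set x : V → ℝ := a • v + b • w with hxdef
    have hxsum : ∑ u, x u = 0 := by
      simp only [hxdef, Pi.add_apply, Pi.smul_apply, smul_eq_mul, Finset.sum_add_distrib,
        ← Finset.mul_sum, ha, hb]
      ring
    have hquad : x ⬝ᵥ (A *ᵥ x) = a ^ 2 * hA.eigenvalues i + b ^ 2 * hA.eigenvalues j := by
      rw [hxdef, Matrix.mulVec_add, Matrix.mulVec_smul, Matrix.mulVec_smul, hAv, hAw]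
      simp only [add_dotProduct, dotProduct_add, smul_dotProduct,
        dotProduct_smul, hvv, hvw, hwv, hww, smul_eq_mul]
      ring
    have hnorm : x ⬝ᵥ x = a ^ 2 + b ^ 2 := by
      rw [hxdef]
      simp only [add_dotProduct, dotProduct_add, smul_dotProduct,
        dotProduct_smul, hvv, hvw, hwv, hww, smul_eq_mul]
      ring
    have hb2 : 0 < b ^ 2 := by
      have : b ≠ 0 := by simpa [hb, neg_eq_zero] using hv0
      positivity
    have hle := hq x hxsum
    rw [hquad, hnorm] at hle
    nlinarith [sq_nonneg a, mul_nonneg (sq_nonneg a) (sub_pos.mpr hi).le,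
      mul_pos hb2 (sub_pos.mpr hj)]

lemma charpoly_diag (d : V → ℝ) :
    (Matrix.diagonal d).charpoly = ∏ i, (X - C (d i)) := by
  have hcm : charmatrix (Matrix.diagonal d) = Matrix.diagonal fun i => (X : ℝ[X]) - C (d i) := by
    ext i j
    by_cases h : i = j
    · subst h; simp
    · simp [Matrix.charmatrix_apply_ne _ _ _ h, Matrix.diagonal_apply_ne _ h]
  rw [Matrix.charpoly, hcm, Matrix.det_diagonal]

/-- The characteristic polynomial of a real symmetric matrix splits with its
eigenvalues as roots. -/
lemma charpoly_hermitian {A : Matrix V V ℝ} (hA : A.IsHermitian) :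
    A.charpoly = ∏ i, (X - C (hA.eigenvalues i)) := by
  have hUU : (hA.eigenvectorUnitary : Matrix V V ℝ) * star (hA.eigenvectorUnitary : Matrix V V ℝ)
      = 1 := Matrix.mem_unitaryGroup_iff.mp hA.eigenvectorUnitary.2
  set U : Matrix V V ℝ := (hA.eigenvectorUnitary : Matrix V V ℝ) with hUdef
  set mC : Matrix V V ℝ →+* Matrix V V ℝ[X] := (C : ℝ →+* ℝ[X]).mapMatrix with hmC
  have h1 : mC U * mC (star U) = 1 := by rw [← _root_.map_mul, hUU, _root_.map_one]
  have hdiag : (Matrix.diagonal (RCLike.ofReal ∘ hA.eigenvalues) : Matrix V V ℝ)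
      = Matrix.diagonal hA.eigenvalues := by congr 1
  have hscalar : mC U * Matrix.scalar V (X : ℝ[X]) * mC (star U)
      = Matrix.scalar V (X : ℝ[X]) := by
    rw [← (Matrix.scalar_commute (X : ℝ[X]) (fun r' => Commute.all _ _) (mC U)).eq,
      Matrix.mul_assoc, h1, Matrix.mul_one]
  have key : charmatrix A = mC U * charmatrix (Matrix.diagonal hA.eigenvalues) * mC (star U) := by
    conv_lhs => rw [hA.spectral_theorem]
    rw [hdiag]
    unfold charmatrix
    rw [Unitary.conjStarAlgAut_apply]
    rw [_root_.map_mul, _root_.map_mul, Matrix.mul_sub, Matrix.sub_mul, hscalar]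
  have hdet : A.charpoly = (Matrix.diagonal hA.eigenvalues).charpoly := by
    rw [Matrix.charpoly, Matrix.charpoly, key, Matrix.det_mul, Matrix.det_mul]
    have hd : (mC U).det * (mC (star U)).det = 1 := by
      rw [← Matrix.det_mul, h1, Matrix.det_one]
    calc (mC U).det * (charmatrix (Matrix.diagonal hA.eigenvalues)).det * (mC (star U)).det
        = (mC U).det * (mC (star U)).det * (charmatrix (Matrix.diagonal hA.eigenvalues)).det := by
          ring
      _ = (charmatrix (Matrix.diagonal hA.eigenvalues)).det := by rw [hd, one_mul]
  rw [hdet, charpoly_diag]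

/-- The roots of the characteristic polynomial of a real symmetric matrix are exactly
its eigenvalues (with multiplicity). -/
lemma roots_charpoly_hermitian {A : Matrix V V ℝ} (hA : A.IsHermitian) :
    A.charpoly.roots = Finset.univ.val.map hA.eigenvalues := by
  rw [charpoly_hermitian hA]
  have : (∏ i, (X - C (hA.eigenvalues i)))
      = ((Finset.univ.val.map hA.eigenvalues).map fun r => X - C r).prod := by
    rw [Multiset.map_map]
    rfl
  rw [this, Polynomial.roots_multiset_prod_X_sub_C]

end Aux

theorem stmt_15 {V : Type*} [Fintype V] [DecidableEq V] (G : SimpleGraph V)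
    [DecidableRel G.Adj] (hn : 2 ≤ Fintype.card V) :
    (eigsDesc (signlessLaplacian G)).getD 1 0 ≤ (Fintype.card V : ℝ) - 2 := by
  classical
  by_contra hlt
  push_neg at hlt
  set c : ℝ := (Fintype.card V : ℝ) - 2 with hc
  have hQ : (signlessLaplacian G).IsHermitian := sL_isHermitian G
  set s : Multiset ℝ := Finset.univ.val.map hQ.eigenvalues with hs
  have hroots : (signlessLaplacian G).charpoly.roots = s := roots_charpoly_hermitian hQ
  set L : List ℝ := eigsDesc (signlessLaplacian G) with hL
  have hLdef : L = (s.sort (· ≤ ·)).reverse := by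
    rw [hL]; unfold eigsDesc; rw [hroots]
  have hlen : L.length = Fintype.card V := by
    rw [hLdef, List.length_reverse, Multiset.length_sort, hs, Multiset.card_map]
    simp
  obtain ⟨aa, t1, h1⟩ := List.exists_cons_of_ne_nil
    (show L ≠ [] by intro h; rw [h] at hlen; simp at hlen; omega)
  obtain ⟨bb, t2, h2⟩ := List.exists_cons_of_ne_nil
    (show t1 ≠ [] by intro h; rw [h1, h] at hlen; simp at hlen; omega)
  have habt : L = aa :: bb :: t2 := by rw [h1, h2]
  have hb : L.getD 1 0 = bb := by rw [habt]; rfl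
  have hpw : L.Pairwise (fun x y => y ≤ x) := by
    rw [hLdef]
    rw [List.pairwise_reverse]
    exact Multiset.pairwise_sort (s := s) (r := (· ≤ ·))
  have hba : bb ≤ aa := by
    rw [habt] at hpw
    exact (List.pairwise_cons.mp hpw).1 bb List.mem_cons_self
  have hbc : c < bb := by rw [← hb]; exact hlt
  have hac : c < aa := lt_of_lt_of_le hbc hba
  -- the multiset of eigenvalues contains at least two members exceeding c
  have hsL : s = (L : Multiset ℝ) := by
    rw [hLdef, Multiset.coe_reverse, Multiset.sort_eq]
  have hcount : 2 ≤ Multiset.countP (fun r => c < r) s := by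
    rw [hsL, habt]
    have : ((aa :: bb :: t2 : List ℝ) : Multiset ℝ) = aa ::ₘ bb ::ₘ (t2 : Multiset ℝ) := rfl
    rw [this, Multiset.countP_cons, Multiset.countP_cons, if_pos hac, if_pos hbc]
    omega
  have hcount' : Multiset.countP (fun r => c < r) s
      = (Finset.univ.filter fun i => c < hQ.eigenvalues i).card := by
    rw [hs, Multiset.countP_map]
    rfl
  rw [hcount'] at hcount
  obtain ⟨i, hi, j, hj, hij⟩ := Finset.one_lt_card.mp (by omega : 1 < (Finset.univ.filter
    fun i => c < hQ.eigenvalues i).card)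
  rw [Finset.mem_filter] at hi hj
  exact atmost_one hQ (fun x hx => sL_quad_le G x hx) hij hi.2 hj.2
end
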